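/- Let n ≥ 1 and let P be a Hermitian positive semi-definite complex matrix of order n², regarded as an n×n array of n×n blocks P_{jk} (so P_{jk}* = P_{kj}). Then the off-diagonal blocks satisfy Σ_{1≤j≠k≤n} ‖P_{jk}‖_F² ≤ (1 − 1/n²)·(Tr P)². -/

import Mathlib

open Matrix
open scoped ComplexOrder

/-- **Bound on the off-diagonal blocks of a positive semi-definite block matrix (Section 4).**
If `P` is a Hermitian positive semi-definite complex matrix of order `n²`, regarded as an
`n×n` array of `n×n` blocks `P_{jk} = (P (j,a) (k,b))_{a,b}`, then
`∑_{j≠k} ‖P_{jk}‖_F² ≤ (1 - 1/n²) (Tr P)²`. -/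
theorem offdiagonal_block_bound
    {n : ℕ} (hn : 1 ≤ n)
    (P : Matrix (Fin n × Fin n) (Fin n × Fin n) ℂ) (hP : P.PosSemidef) :
    ∑ j : Fin n, ∑ k : Fin n,
        (if j ≠ k then ∑ a : Fin n, ∑ b : Fin n, Complex.normSq (P (j, a) (k, b)) else 0)
      ≤ (1 - 1 / (n : ℝ) ^ 2) * P.trace.re ^ 2 := by
  obtain ⟨B, rfl⟩ : ∃ B : Matrix (Fin n × Fin n) (Fin n × Fin n) ℂ, P = Bᴴ * B := by
    open scoped MatrixOrder in exact CStarAlgebra.nonneg_iff_eq_star_mul_self.mp hP.nonneg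
  set P := Bᴴ * B with hPdef
  set d : Fin n × Fin n → ℝ := fun I => ∑ K, Complex.normSq (B K I) with hd
  have hdnn : ∀ I, 0 ≤ d I := fun I => Finset.sum_nonneg fun _ _ => Complex.normSq_nonneg _
  have hentry : ∀ I J, P I J = ∑ K, (starRingEnd ℂ) (B K I) * B K J := by
    intro I J; simp [hPdef, Matrix.mul_apply, Matrix.conjTranspose_apply]
  have hdiag : ∀ I, P I I = (d I : ℂ) := by
    intro I
    rw [hentry]
    simp only [← Complex.normSq_eq_conj_mul_self, hd]
    push_cast
    rfl
  have hkey : ∀ I J, Complex.normSq (P I J) ≤ d I * d J := by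
    intro I J
    have h1 : ‖P I J‖ ≤ ∑ K, ‖B K I‖ * ‖B K J‖ := by
      rw [hentry]
      refine (norm_sum_le _ _).trans (le_of_eq ?_)
      refine Finset.sum_congr rfl fun K _ => ?_
      rw [norm_mul, RingHomIsometric.norm_map]
    calc Complex.normSq (P I J) = ‖P I J‖ ^ 2 := by
          rw [← Complex.sq_norm]
      _ ≤ (∑ K, ‖B K I‖ * ‖B K J‖) ^ 2 := by
          exact pow_le_pow_left₀ (norm_nonneg _) h1 2
      _ ≤ (∑ K, ‖B K I‖ ^ 2) * (∑ K, ‖B K J‖ ^ 2) :=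
          Finset.sum_mul_sq_le_sq_mul_sq _ _ _
      _ = d I * d J := by
          simp [hd, ← Complex.sq_norm]
  set T : ℝ := ∑ I : Fin n × Fin n, d I with hT
  have htrace : P.trace.re = T := by
    rw [Matrix.trace, Complex.re_sum]
    refine Finset.sum_congr rfl fun I _ => ?_
    rw [Matrix.diag_apply, hdiag, Complex.ofReal_re]
  rw [htrace]
  have hTnn : 0 ≤ T := Finset.sum_nonneg fun I _ => hdnn I
  have hn0 : (0:ℝ) < n := by positivity
  -- total Frobenius bound
  have hT2 : T ^ 2 = ∑ j : Fin n, ∑ a : Fin n, ∑ k : Fin n, ∑ b : Fin n, d (j, a) * d (k, b) := by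
    rw [sq, hT, Finset.sum_mul_sum]
    simp only [Fintype.sum_prod_type]
  have hA : ∑ j : Fin n, ∑ k : Fin n, ∑ a : Fin n, ∑ b : Fin n,
      Complex.normSq (P (j, a) (k, b)) ≤ T ^ 2 := by
    rw [hT2]
    have hswap : ∑ j : Fin n, ∑ k : Fin n, ∑ a : Fin n, ∑ b : Fin n,
        Complex.normSq (P (j, a) (k, b))
        = ∑ j : Fin n, ∑ a : Fin n, ∑ k : Fin n, ∑ b : Fin n,
          Complex.normSq (P (j, a) (k, b)) :=
      Finset.sum_congr rfl fun j _ => Finset.sum_comm ..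
    rw [hswap]
    exact Finset.sum_le_sum fun j _ => Finset.sum_le_sum fun a _ =>
      Finset.sum_le_sum fun k _ => Finset.sum_le_sum fun b _ => hkey _ _
  set t : Fin n → ℝ := fun j => ∑ a, d (j, a) with ht
  have htT : T = ∑ j, t j := by
    rw [hT, ht]
    simp only [Fintype.sum_prod_type]
  -- diagonal block lower bound
  have hC : ∀ j, t j ^ 2 / n ≤ ∑ a : Fin n, ∑ b : Fin n, Complex.normSq (P (j, a) (j, b)) := by
    intro j
    have h1 : t j ^ 2 ≤ n * ∑ a : Fin n, d (j, a) ^ 2 := by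
      have := sq_sum_le_card_mul_sum_sq (s := Finset.univ) (f := fun a : Fin n => d (j, a))
      simpa using this
    have h2 : ∑ a : Fin n, d (j, a) ^ 2 ≤
        ∑ a : Fin n, ∑ b : Fin n, Complex.normSq (P (j, a) (j, b)) := by
      refine Finset.sum_le_sum fun a _ => ?_
      have hsingle : Complex.normSq (P (j, a) (j, a)) ≤
          ∑ b : Fin n, Complex.normSq (P (j, a) (j, b)) :=
        Finset.single_le_sum (f := fun b => Complex.normSq (P (j, a) (j, b)))
          (fun b _ => Complex.normSq_nonneg _) (Finset.mem_univ a)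
      have heq : Complex.normSq (P (j, a) (j, a)) = d (j, a) ^ 2 := by
        rw [hdiag, Complex.normSq_ofReal, sq]
      linarith
    rw [div_le_iff₀ hn0]
    calc t j ^ 2 ≤ n * ∑ a : Fin n, d (j, a) ^ 2 := h1
      _ = (∑ a : Fin n, d (j, a) ^ 2) * n := mul_comm _ _
      _ ≤ (∑ a : Fin n, ∑ b : Fin n, Complex.normSq (P (j, a) (j, b))) * n :=
          mul_le_mul_of_nonneg_right h2 (le_of_lt hn0)
  have hC' : T ^ 2 / (n:ℝ) ^ 2 ≤ ∑ j : Fin n, ∑ a : Fin n, ∑ b : Fin n,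
      Complex.normSq (P (j, a) (j, b)) := by
    have h1 : T ^ 2 ≤ n * ∑ j, t j ^ 2 := by
      rw [htT]
      have := sq_sum_le_card_mul_sum_sq (s := Finset.univ) (f := t)
      simpa using this
    have h2 : (∑ j, t j ^ 2) / n ≤ ∑ j : Fin n, ∑ a : Fin n, ∑ b : Fin n,
        Complex.normSq (P (j, a) (j, b)) := by
      rw [Finset.sum_div]
      exact Finset.sum_le_sum fun j _ => hC j
    have h3 : T ^ 2 / (n:ℝ) ^ 2 ≤ (∑ j, t j ^ 2) / n := by
      rw [div_le_div_iff₀ (by positivity) hn0]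
      nlinarith [h1]
    linarith
  -- split off-diagonal
  have hsplit : ∑ j : Fin n, ∑ k : Fin n,
      (if j ≠ k then ∑ a : Fin n, ∑ b : Fin n, Complex.normSq (P (j, a) (k, b)) else 0)
      = (∑ j : Fin n, ∑ k : Fin n, ∑ a : Fin n, ∑ b : Fin n, Complex.normSq (P (j, a) (k, b)))
        - ∑ j : Fin n, ∑ a : Fin n, ∑ b : Fin n, Complex.normSq (P (j, a) (j, b)) := by
    rw [← Finset.sum_sub_distrib]
    refine Finset.sum_congr rfl fun j _ => ?_
    rw [eq_sub_iff_add_eq]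
    have h1 : ∑ k : Fin n, (if j = k then ∑ a : Fin n, ∑ b : Fin n,
        Complex.normSq (P (j, a) (k, b)) else 0)
        = ∑ a : Fin n, ∑ b : Fin n, Complex.normSq (P (j, a) (j, b)) := by simp
    rw [← h1, ← Finset.sum_add_distrib]
    refine Finset.sum_congr rfl fun k _ => ?_
    by_cases h : j = k <;> simp [h]
  rw [hsplit]
  have hn2 : (0:ℝ) < (n:ℝ) ^ 2 := by positivity
  have hexp : (1 - 1 / (n:ℝ) ^ 2) * T ^ 2 = T ^ 2 - T ^ 2 / (n:ℝ) ^ 2 := by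
    field_simp
  linarith [hA, hC']
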